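/- Let ν̂, ω, ω′ be real numbers with ω′ > −ν̂ + ω and θ₀ ∈ (π/2, π). Then for every μ in the complement of the sector Σ(ω′; θ₀), the distance estimate |μ + ν̂ − ω| ≥ sin(θ₀) · |ω′ + ν̂ − ω| holds. -/

import Mathlib

/-- The sector `Σ(a; θ₀) = { a + r e^{iθ} : r > 0, θ ∈ (-π, π], |θ| ≥ θ₀ }` in `ℂ`. -/
def Sector (a θ₀ : ℝ) : Set ℂ :=
  {z | ∃ r : ℝ, 0 < r ∧ ∃ θ : ℝ, θ ∈ Set.Ioc (-Real.pi) Real.pi ∧ θ₀ ≤ |θ| ∧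
    z = (a : ℂ) + (r : ℂ) * Complex.exp ((θ : ℂ) * Complex.I)}

/-- Let `ν̂, ω, ω′` be real with `ω′ > -ν̂ + ω` and `θ₀ ∈ (π/2, π)`.  Then every `μ`
in the complement of `Σ(ω′; θ₀)` satisfies `|μ + ν̂ - ω| ≥ sin θ₀ · |ω′ + ν̂ - ω|`. -/
theorem stmt_4 (νh ω ω' θ₀ : ℝ) (hω' : -νh + ω < ω')
    (hθ : θ₀ ∈ Set.Ioo (Real.pi / 2) Real.pi)
    (μ : ℂ) (hμ : μ ∉ Sector ω' θ₀) :
    Real.sin θ₀ * |ω' + νh - ω| ≤ ‖μ + (νh : ℂ) - (ω : ℂ)‖ := by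
  obtain ⟨hθ1, hθ2⟩ := hθ
  have hπ := Real.pi_pos
  have hsθ₀ : 0 < Real.sin θ₀ := Real.sin_pos_of_pos_of_lt_pi (by linarith) hθ2
  have hsθ₀1 : Real.sin θ₀ ≤ 1 := Real.sin_le_one _
  have hd0 : 0 < ω' + νh - ω := by linarith
  rw [abs_of_pos hd0]
  set d : ℝ := ω' + νh - ω with hd
  by_cases hz : μ = (ω' : ℂ)
  · subst hz
    have : (ω' : ℂ) + (νh : ℂ) - (ω : ℂ) = ((d : ℝ) : ℂ) := by push_cast [hd]; ring
    rw [this, Complex.norm_real, Real.norm_eq_abs, abs_of_pos hd0]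
    nlinarith
  · have hz0 : μ - ω' ≠ 0 := sub_ne_zero.mpr hz
    set r := ‖μ - ω'‖ with hr
    set θ := Complex.arg (μ - ω') with hθdef
    have hrpos : 0 < r := norm_pos_iff.mpr hz0
    have hpolar : μ - ω' = (r : ℂ) * Complex.exp ((θ : ℂ) * Complex.I) :=
      (Complex.norm_mul_exp_arg_mul_I (μ - ω')).symm
    have hθmem : θ ∈ Set.Ioc (-Real.pi) Real.pi :=
      ⟨Complex.neg_pi_lt_arg _, Complex.arg_le_pi _⟩
    have hlt : |θ| < θ₀ := by
      by_contra h
      push_neg at h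
      exact hμ ⟨r, hrpos, θ, hθmem, h, by rw [← hpolar]; ring⟩
    have hRe : (μ + (νh : ℂ) - (ω : ℂ)).re = d + r * Real.cos θ := by
      have : μ + (νh : ℂ) - (ω : ℂ) = (μ - ω') + ((d : ℝ) : ℂ) := by push_cast [hd]; ring
      rw [this, hpolar]
      simp [Complex.exp_mul_I, Complex.add_re, Complex.mul_re, Complex.cos_ofReal_re,
        Complex.sin_ofReal_re]
      ring
    have hIm : (μ + (νh : ℂ) - (ω : ℂ)).im = r * Real.sin θ := by
      have : μ + (νh : ℂ) - (ω : ℂ) = (μ - ω') + ((d : ℝ) : ℂ) := by push_cast [hd]; ring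
      rw [this, hpolar]
      simp [Complex.exp_mul_I, Complex.add_im, Complex.mul_im, Complex.cos_ofReal_re,
        Complex.sin_ofReal_re]
    set A := ‖μ + (νh : ℂ) - (ω : ℂ)‖ with hA
    have hAnn : 0 ≤ A := norm_nonneg _
    have hsq : A ^ 2 = (d + r * Real.cos θ) ^ 2 + (r * Real.sin θ) ^ 2 := by
      rw [hA, Complex.sq_norm, Complex.normSq_apply, hRe, hIm]; ring
    by_cases hc : 0 ≤ Real.cos θ
    · have hre : (μ + (νh : ℂ) - (ω : ℂ)).re ≤ A := Complex.re_le_norm _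
      rw [hRe] at hre
      nlinarith
    · push_neg at hc
      have habsθ : Real.pi / 2 < |θ| := by
        by_contra h
        push_neg at h
        have : 0 ≤ Real.cos θ := Real.cos_nonneg_of_mem_Icc
          ⟨by cases abs_cases θ with
            | inl h' => linarith [h'.1, h]
            | inr h' => linarith [h'.1, abs_nonneg θ, h],
           by cases abs_cases θ with
            | inl h' => linarith [h'.1, h]
            | inr h' => linarith [h'.1, abs_nonneg θ]⟩
        linarith
      have hsin : Real.sin θ₀ ≤ Real.sin |θ| := by
        rw [← Real.sin_pi_sub θ₀, ← Real.sin_pi_sub |θ|]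
        have := Real.sin_lt_sin_of_lt_of_le_pi_div_two (x := Real.pi - θ₀)
          (y := Real.pi - |θ|) (by linarith) (by linarith) (by linarith)
        linarith
      have hss2 : Real.sin θ₀ ^ 2 ≤ Real.sin θ ^ 2 := by
        rcases abs_choice θ with h | h
        · rw [← h]; nlinarith
        · have : Real.sin |θ| = - Real.sin θ := by rw [h, Real.sin_neg]
          nlinarith
      have hid := Real.sin_sq_add_cos_sq θ
      have e1 : d ^ 2 * (Real.sin θ ^ 2 + Real.cos θ ^ 2) = d ^ 2 := by rw [hid]; ring
      have e2 : r ^ 2 * (Real.sin θ ^ 2 + Real.cos θ ^ 2) = r ^ 2 := by rw [hid]; ring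
      have key : (Real.sin θ₀ * d) ^ 2 ≤ A ^ 2 := by
        nlinarith [hsq, e1, e2, sq_nonneg (d * Real.cos θ + r),
          mul_le_mul_of_nonneg_left hss2 (sq_nonneg d)]
      calc Real.sin θ₀ * d = Real.sqrt ((Real.sin θ₀ * d) ^ 2) :=
            (Real.sqrt_sq (by positivity)).symm
        _ ≤ Real.sqrt (A ^ 2) := Real.sqrt_le_sqrt key
        _ = A := Real.sqrt_sq hAnn
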